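/- Let a directed multigraph be given by a finite type P of vertices and a finite type T of edges with maps src, tgt : T → P, and write m = Fintype.card T. For every walk w from a vertex v there exists a walk w' from v of length at most m * (m + 1) that traverses exactly the same set of edges as w. -/

import Mathlib

/-- `w` (restricted to indices `< n`) is a walk of length `n` from `v` in the
directed multigraph given by `src` and `tgt`. -/
def IsWalk {P T : Type} (src tgt : T → P) (v : P) (n : ℕ) (w : ℕ → T) : Prop :=
  (0 < n → src (w 0) = v) ∧ ∀ j : ℕ, j + 1 < n → tgt (w j) = src (w (j + 1))

/-- Cutting a segment `[a, b)` out of a walk, provided the endpoints match up and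
every edge inside the segment already occurs before `a`. -/
lemma cut_walk {P T : Type} (src tgt : T → P) (v : P) (n : ℕ) (w : ℕ → T)
    (hw : IsWalk src tgt v n w) (a b : ℕ) (hab : a ≤ b) (hbn : b ≤ n)
    (hsrc : b < n → src (w a) = src (w b))
    (hsafe : ∀ j, a ≤ j → j < b → ∃ k, k < a ∧ w k = w j) :
    IsWalk src tgt v (n - (b - a)) (fun j => if j < a then w j else w (j + (b - a))) ∧
      {t : T | ∃ j < n - (b - a), (fun j => if j < a then w j else w (j + (b - a))) j = t} =
        {t : T | ∃ j < n, w j = t} := by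
  set d := b - a with hd
  have hadb : a + d = b := Nat.add_sub_cancel' hab
  have hn'le : n - d ≤ n := Nat.sub_le n d
  have han' : a ≤ n - d := by omega
  constructor
  · constructor
    · intro h0
      by_cases ha : 0 < a
      · simp only [ha, if_pos]
        exact hw.1 (lt_of_lt_of_le h0 hn'le)
      · have ha0 : a = 0 := by omega
        have hbnlt : b < n := by omega
        have e : (if 0 < a then w 0 else w (0 + d)) = w b := by
          rw [if_neg ha]; congr 1; omega
        simp only [e]
        rw [← hsrc hbnlt, ha0]
        exact hw.1 (by omega)
    · intro j hj
      by_cases h1 : j + 1 < a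
      · have h2 : j < a := by omega
        simp only [h1, h2, if_pos]
        exact hw.2 j (by omega)
      · by_cases h2 : j < a
        · have hja : j + 1 = a := by omega
          have hbnlt : b < n := by omega
          have e : (if j + 1 < a then w (j + 1) else w (j + 1 + d)) = w b := by
            rw [if_neg h1]; congr 1; omega
          simp only [h2, if_pos, e]
          rw [← hsrc hbnlt, ← hja]
          exact hw.2 j (by omega)
        · have h1' : ¬ j + 1 < a := by omega
          simp only [h1', h2, if_neg]
          have : j + 1 + d = (j + d) + 1 := by omega
          rw [this]
          exact hw.2 (j + d) (by omega)
  · ext t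
    simp only [Set.mem_setOf_eq]
    constructor
    · rintro ⟨j, hj, heq⟩
      by_cases hja : j < a
      · exact ⟨j, by omega, by simpa [hja] using heq⟩
      · exact ⟨j + d, by omega, by simpa [hja] using heq⟩
    · rintro ⟨j, hj, heq⟩
      by_cases hja : j < a
      · exact ⟨j, by omega, by simpa [hja] using heq⟩
      · by_cases hjb : j < b
        · obtain ⟨k, hka, hkw⟩ := hsafe j (by omega) hjb
          exact ⟨k, by omega, by simp [hka, hkw, heq]⟩
        · refine ⟨j - d, by omega, ?_⟩
          have h1 : ¬ j - d < a := by omega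
          have h2 : j - d + d = j := by omega
          simp [h1, h2, heq]

/-- every walk from `v` can be replaced by a walk from `v` of length
at most `m * (m + 1)` traversing exactly the same set of edges. -/
theorem walk_shorten (P T : Type) [Fintype P] [Fintype T] (src tgt : T → P)
    (v : P) (n : ℕ) (w : ℕ → T) (hw : IsWalk src tgt v n w) :
    ∃ (n' : ℕ) (w' : ℕ → T),
      n' ≤ Fintype.card T * (Fintype.card T + 1) ∧
      IsWalk src tgt v n' w' ∧
      {t : T | ∃ j < n', w' j = t} = {t : T | ∃ j < n, w j = t} := by
  classical
  set m := Fintype.card T with hm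
  induction n using Nat.strong_induction_on generalizing w with
  | _ n ih =>
  by_cases hsmall : n ≤ m * (m + 1)
  · exact ⟨n, w, hsmall, hw, rfl⟩
  push_neg at hsmall
  have hm1 : 1 ≤ m := by
    by_contra h
    have : IsEmpty T := Fintype.card_eq_zero_iff.mp (by omega)
    exact this.elim (w 0)
  -- the set of first occurrences
  set F : Finset ℕ := (Finset.range n).filter (fun j => ∀ k < j, w k ≠ w j) with hF
  have hFcard : F.card ≤ m := by
    rw [hm, ← Finset.card_univ]
    apply Finset.card_le_card_of_injOn w (fun x _ => Finset.mem_univ _)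
    intro j1 h1 j2 h2 heq
    by_contra hne
    rcases Nat.lt_or_ge j1 j2 with h | h
    · exact (Finset.mem_filter.mp h2).2 j1 h heq
    · exact (Finset.mem_filter.mp h1).2 j2 (by omega) heq.symm
  -- find an interval of length m free of first occurrences
  have hfree : ∃ i ≤ m, ∀ j, i * m ≤ j → j < i * m + m → j ∉ F := by
    by_contra h
    push_neg at h
    have h' : ∀ i : ℕ, ∃ j, i ≤ m → (i * m ≤ j ∧ j < i * m + m ∧ j ∈ F) := by
      intro i
      by_cases hi : i ≤ m
      · obtain ⟨j, hj1, hj2, hj3⟩ := h i hi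
        exact ⟨j, fun _ => ⟨hj1, hj2, hj3⟩⟩
      · exact ⟨0, fun hh => absurd hh hi⟩
    choose g hg using h'
    have : (Finset.range (m + 1)).card ≤ F.card := by
      apply Finset.card_le_card_of_injOn g
      · intro i hi
        simp only [Finset.mem_coe, Finset.mem_range] at hi
        exact (hg i (by omega)).2.2
      · intro i1 h1 i2 h2 heq
        simp only [Finset.mem_coe, Finset.mem_range] at h1 h2
        have e1 : g i1 / m = i1 :=
          Nat.div_eq_of_lt_le (hg i1 (by omega)).1 (by rw [show (i1+1)*m = i1*m + m from by ring]; exact (hg i1 (by omega)).2.1)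
        have e2 : g i2 / m = i2 :=
          Nat.div_eq_of_lt_le (hg i2 (by omega)).1 (by rw [show (i2+1)*m = i2*m + m from by ring]; exact (hg i2 (by omega)).2.1)
        rw [← e1, ← e2, heq]
    simp only [Finset.card_range] at this
    omega
  obtain ⟨i, him, hgap⟩ := hfree
  set c := i * m with hc
  have hcm : c + m ≤ m * (m + 1) := by
    have h1 : i * m ≤ m * m := Nat.mul_le_mul_right m him
    have h2 : m * (m + 1) = m * m + m := by ring
    omega
  -- every edge in the gap occurs before c
  have hfo : ∀ j, c ≤ j → j < c + m → ∃ k, k < c ∧ w k = w j := by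
    intro j hcj hjcm
    have hjex : ∃ k, w k = w j := ⟨j, rfl⟩
    set k0 := Nat.find hjex with hk0
    have hk0spec : w k0 = w j := Nat.find_spec hjex
    have hk0le : k0 ≤ j := Nat.find_le rfl
    have hk0F : k0 ∈ F := by
      rw [hF, Finset.mem_filter, Finset.mem_range]
      refine ⟨by omega, fun k hk hkeq => ?_⟩
      exact Nat.find_min hjex hk (hkeq.trans hk0spec)
    have : ¬ (c ≤ k0) := by
      intro hck0
      exact hgap k0 hck0 (by omega) hk0F
    exact ⟨k0, by omega, hk0spec⟩
  -- pigeonhole: two equal edges among indices c .. c+m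
  have hpig : ∃ x ∈ Finset.Icc c (c + m), ∃ y ∈ Finset.Icc c (c + m), x ≠ y ∧ w x = w y := by
    apply Finset.exists_ne_map_eq_of_card_lt_of_maps_to
    · rw [Nat.card_Icc, Finset.card_univ, ← hm]
      omega
    · intro x _
      exact Finset.mem_univ _
  obtain ⟨x, hx, y, hy, hxy, hwxy⟩ := hpig
  simp only [Finset.mem_Icc] at hx hy
  -- wlog x < y
  obtain ⟨a, b, hab, ha, hb, hwab⟩ : ∃ a b : ℕ, a < b ∧ c ≤ a ∧ b ≤ c + m ∧ w a = w b := by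
    rcases Nat.lt_or_ge x y with h | h
    · exact ⟨x, y, h, hx.1, hy.2, hwxy⟩
    · exact ⟨y, x, by omega, hy.1, hx.2, hwxy.symm⟩
  have hbn : b < n := by omega
  obtain ⟨hw', hset'⟩ := cut_walk src tgt v n w hw a b (le_of_lt hab) (le_of_lt hbn)
    (fun _ => by rw [hwab])
    (fun j hj1 hj2 => by
      obtain ⟨k, hk, hkw⟩ := hfo j (by omega) (by omega)
      exact ⟨k, by omega, hkw⟩)
  obtain ⟨n', w', hn', hwalk', hset''⟩ := ih (n - (b - a)) (by omega) _ hw'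
  exact ⟨n', w', hn', hwalk', hset''.trans hset'⟩
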